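/- Let S_{n+1} act on ℝ^n by permuting n+1 affinely independent vectors v_1, …, v_{n+1} (i.e., permuting barycentric coordinates with respect to these vectors). Then for each d ≥ 1, the set S of points x whose barycentric coordinates α_1^x, …, α_{n+1}^x (with Σ_i α_i^x = 1 and x = Σ_i α_i^x v_i) all lie in {k/d : k = 0, …, d} is an S_{n+1}-invariant, minimal unisolvent set for ℝ[x]_{≤d}. -/

import Mathlib

open Matrix MvPolynomial BigOperators

section Stmt8AuxSec

namespace Stmt8Aux

variable {n : ℕ}

/-- An affine map `ℝ^n → ℝ` as a multivariate polynomial of degree at most 1. -/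
noncomputable def toPoly (f : (Fin n → ℝ) →ᵃ[ℝ] ℝ) : MvPolynomial (Fin n) ℝ :=
  C (f 0) + ∑ j, C (f.linear (Pi.single j 1)) * X j

lemma eval_toPoly (f : (Fin n → ℝ) →ᵃ[ℝ] ℝ) (x : Fin n → ℝ) :
    eval x (toPoly f) = f x := by
  have h1 : f x = f.linear x + f 0 := by
    have := f.map_vadd 0 x
    simpa [vadd_eq_add] using this
  have h2 : f.linear x = ∑ j, f.linear (Pi.single j 1) * x j := by
    rw [f.linear.pi_apply_eq_sum_univ x]
    refine Finset.sum_congr rfl fun j _ => ?_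
    rw [smul_eq_mul, mul_comm]
    congr 1
    congr 1
    ext t
    simp [Pi.single_apply, eq_comm]
  simp only [toPoly, map_add, eval_C, map_sum, _root_.map_mul, eval_X, h1, h2]
  ring

lemma totalDegree_toPoly (f : (Fin n → ℝ) →ᵃ[ℝ] ℝ) : (toPoly f).totalDegree ≤ 1 := by
  refine (totalDegree_add _ _).trans (max_le (by simp) ?_)
  refine (totalDegree_finset_sum _ _).trans (Finset.sup_le fun j _ => ?_)
  refine (totalDegree_mul _ _).trans ?_
  simp [totalDegree_X]

variable (d : ℕ) (B : AffineBasis (Fin (n + 1)) ℝ (Fin n → ℝ))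

/-- The lattice point associated to a multi-index `k`. -/
noncomputable def pt (k : Fin (n + 1) → ℕ) : Fin n → ℝ := ∑ i, ((k i : ℝ) / d) • B i

lemma coord_sum (α : Fin (n + 1) → ℝ) (hα : ∑ i, α i = 1) (i : Fin (n + 1)) :
    B.coord i (∑ j, α j • B j) = α i := by
  rw [← Finset.affineCombination_eq_linear_combination _ _ _ hα]
  exact B.coord_apply_combination_of_mem (Finset.mem_univ i) hα

lemma sum_weights (hd : 1 ≤ d) {k : Fin (n + 1) → ℕ} (hk : ∑ i, k i = d) :
    ∑ i, ((k i : ℝ) / d) = 1 := by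
  rw [← Finset.sum_div]
  rw [← Nat.cast_sum, hk]
  exact div_self (Nat.cast_pos.mpr hd).ne'

lemma coord_pt (hd : 1 ≤ d) {k : Fin (n + 1) → ℕ} (hk : ∑ i, k i = d) (i : Fin (n + 1)) :
    B.coord i (pt d B k) = (k i : ℝ) / d :=
  coord_sum B _ (sum_weights d hd hk) i

/-- The Lagrange polynomial associated to a multi-index `k`. -/
noncomputable def Lag (k : Fin (n + 1) → ℕ) : MvPolynomial (Fin n) ℝ :=
  ∏ i, ∏ j ∈ Finset.range (k i), (C (d : ℝ) * toPoly (B.coord i) - C (j : ℝ))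

lemma totalDegree_Lag {k : Fin (n + 1) → ℕ} (hk : ∑ i, k i = d) :
    (Lag d B k).totalDegree ≤ d := by
  refine (totalDegree_finset_prod _ _).trans ?_
  calc ∑ i, (∏ j ∈ Finset.range (k i),
        (C (d : ℝ) * toPoly (B.coord i) - C (j : ℝ))).totalDegree
      ≤ ∑ i, k i := by
        refine Finset.sum_le_sum fun i _ => ?_
        refine (totalDegree_finset_prod _ _).trans ?_
        calc ∑ j ∈ Finset.range (k i),
              (C (d : ℝ) * toPoly (B.coord i) - C (j : ℝ)).totalDegree
            ≤ ∑ _j ∈ Finset.range (k i), 1 := by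
              refine Finset.sum_le_sum fun j _ => ?_
              refine (totalDegree_sub _ _).trans
                (max_le ?_ (by rw [totalDegree_C]; exact Nat.zero_le 1))
              refine (totalDegree_mul _ _).trans ?_
              rw [totalDegree_C]
              simpa using totalDegree_toPoly (B.coord i)
          _ = k i := by simp
    _ = d := hk

lemma eval_Lag (hd : 1 ≤ d) {k m : Fin (n + 1) → ℕ} (hm : ∑ i, m i = d) :
    eval (pt d B m) (Lag d B k) = ∏ i, ∏ j ∈ Finset.range (k i), ((m i : ℝ) - j) := by
  rw [Lag, map_prod]
  refine Finset.prod_congr rfl fun i _ => ?_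
  rw [map_prod]
  refine Finset.prod_congr rfl fun j _ => ?_
  rw [map_sub, _root_.map_mul, eval_C, eval_C, eval_toPoly, coord_pt d B hd hm,
    mul_div_cancel₀ _ (Nat.cast_pos.mpr hd).ne']

lemma eval_Lag_self (hd : 1 ≤ d) {k : Fin (n + 1) → ℕ} (hk : ∑ i, k i = d) :
    eval (pt d B k) (Lag d B k) ≠ 0 := by
  rw [eval_Lag d B hd hk]
  refine Finset.prod_ne_zero_iff.2 fun i _ => Finset.prod_ne_zero_iff.2 fun j hj => ?_
  rw [Finset.mem_range] at hj
  have : (j : ℝ) < (k i : ℝ) := by exact_mod_cast hj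
  exact sub_ne_zero.2 (by linarith)

lemma eval_Lag_ne (hd : 1 ≤ d) {k m : Fin (n + 1) → ℕ} (hk : ∑ i, k i = d)
    (hm : ∑ i, m i = d) (hne : m ≠ k) :
    eval (pt d B m) (Lag d B k) = 0 := by
  rw [eval_Lag d B hd hm]
  have : ∃ i, m i < k i := by
    by_contra h
    push_neg at h
    refine hne (funext fun i => ?_)
    have := (Finset.sum_eq_sum_iff_of_le (fun i _ => h i)).1 (hk.trans hm.symm)
    exact (this i (Finset.mem_univ i)).symm
  obtain ⟨i, hi⟩ := this
  refine Finset.prod_eq_zero (Finset.mem_univ i) ?_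
  refine Finset.prod_eq_zero (Finset.mem_range.2 hi) ?_
  simp

lemma fsum (f : Fin n →₀ ℕ) : (f.sum fun _ e => e) = ∑ i, f i :=
  Finsupp.sum_fintype _ _ (fun _ => rfl)

/-- Adding a slack variable: multi-indices in `n` variables of total degree at most `d`
are in bijection with multi-indices in `n+1` variables of total degree exactly `d`. -/
noncomputable def slackEquiv (n d : ℕ) :
    {f : Fin n →₀ ℕ // (f.sum fun _ e => e) ≤ d} ≃ {k : Fin (n + 1) → ℕ // ∑ i, k i = d} where
  toFun f := ⟨Fin.cons (d - ∑ i, f.1 i) ⇑f.1, by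
    rw [Fin.sum_cons]
    have h : ∑ i, f.1 i ≤ d := by rw [← fsum]; exact f.2
    omega⟩
  invFun k := ⟨Finsupp.equivFunOnFinite.symm (fun i => k.1 i.succ), by
    rw [fsum]
    have h := k.2
    rw [Fin.sum_univ_succ] at h
    simp only [Finsupp.coe_equivFunOnFinite_symm]
    omega⟩
  left_inv f := by
    ext i
    simp
  right_inv k := by
    ext i
    refine Fin.cases ?_ (fun j => ?_) i
    · have h := k.2
      rw [Fin.sum_univ_succ] at h
      simp only [Fin.cons_zero, Finsupp.coe_equivFunOnFinite_symm]
      omega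
    · simp

lemma finrank_restrict (n d : ℕ) :
    Module.finrank ℝ (restrictTotalDegree (Fin n) ℝ d)
      = (Finset.Nat.antidiagonalTuple (n + 1) d).card := by
  classical
  have e2 : {k : Fin (n + 1) → ℕ // ∑ i, k i = d}
      ≃ ↥(Finset.Nat.antidiagonalTuple (n + 1) d) :=
    Equiv.subtypeEquivRight fun k => Finset.Nat.mem_antidiagonalTuple.symm
  have h := Module.finrank_eq_card_basis
    ((basisRestrictSupport ℝ {f : Fin n →₀ ℕ | (f.sum fun _ e => e) ≤ d}).reindex
      ((slackEquiv n d).trans e2))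
  exact h.trans (Fintype.card_coe _)

end Stmt8Aux

end Stmt8AuxSec

/-- Let `S_{n+1}` act on `ℝ^n` by permuting `n+1` affinely independent vectors
`v_1, …, v_{n+1}` (i.e. permuting barycentric coordinates). For `d ≥ 1`, the set `S` of
points whose barycentric coordinates all lie in `{k/d : k = 0, …, d}` is an
`S_{n+1}`-invariant, minimal unisolvent set for the polynomials of degree at most `d`. -/
theorem stmt_8 {n d : ℕ} (hd : 1 ≤ d)
    (v : Fin (n + 1) → (Fin n → ℝ)) (hv : AffineIndependent ℝ v) :
    let S : Set (Fin n → ℝ) := {x | ∃ α : Fin (n + 1) → ℝ,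
      (∑ i, α i) = 1 ∧ x = ∑ i, α i • v i ∧ ∀ i, ∃ k : ℕ, k ≤ d ∧ α i = (k : ℝ) / d}
    -- `S` is invariant under permuting the barycentric coordinates
    (∀ (σ : Equiv.Perm (Fin (n + 1))) (α : Fin (n + 1) → ℝ), (∑ i, α i) = 1 →
      (∑ i, α i • v i) ∈ S → (∑ i, α i • v (σ i)) ∈ S) ∧
    -- `S` is minimal: it is finite of cardinality `dim ℝ[x]_{≤d}`
    S.Finite ∧
    S.ncard = Module.finrank ℝ (MvPolynomial.restrictTotalDegree (Fin n) ℝ d) ∧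
    -- `S` is unisolvent for `ℝ[x]_{≤d}`
    (∀ p : MvPolynomial (Fin n) ℝ, p.totalDegree ≤ d →
      (∀ x ∈ S, MvPolynomial.eval x p = 0) → p = 0) := by
  intro S
  classical
  have hd0 : (0 : ℝ) < d := by exact_mod_cast hd
  -- `v` is an affine basis of `ℝ^n`
  have htot : affineSpan ℝ (Set.range v) = ⊤ := by
    rw [hv.affineSpan_eq_top_iff_card_eq_finrank_add_one]
    simp [Module.finrank_fin_fun]
  let B : AffineBasis (Fin (n + 1)) ℝ (Fin n → ℝ) := ⟨v, hv, htot⟩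
  have hB : ⇑B = v := rfl
  set T : Finset (Fin (n + 1) → ℕ) := Finset.Nat.antidiagonalTuple (n + 1) d with hT
  have hmemT : ∀ k : Fin (n + 1) → ℕ, k ∈ T ↔ ∑ i, k i = d := fun k =>
    Finset.Nat.mem_antidiagonalTuple
  have hS_def : S = {x | ∃ α : Fin (n + 1) → ℝ,
      (∑ i, α i) = 1 ∧ x = ∑ i, α i • v i ∧ ∀ i, ∃ k : ℕ, k ≤ d ∧ α i = (k : ℝ) / d} := rfl
  -- membership of lattice points in `S`
  have hpt_mem : ∀ k ∈ T, Stmt8Aux.pt d B k ∈ S := by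
    intro k hk
    rw [hS_def]
    refine ⟨fun i => (k i : ℝ) / d, Stmt8Aux.sum_weights d hd ((hmemT k).1 hk), ?_, ?_⟩
    · rw [Stmt8Aux.pt, hB]
    · intro i
      refine ⟨k i, ?_, rfl⟩
      calc k i ≤ ∑ j, k j := Finset.single_le_sum (fun j _ => Nat.zero_le _) (Finset.mem_univ i)
        _ = d := (hmemT k).1 hk
  -- `S` is exactly the image of the lattice multi-indices
  have hS_eq : S = Stmt8Aux.pt d B '' ↑T := by
    apply Set.Subset.antisymm
    · rintro x ⟨α, hα1, hx, hαk⟩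
      choose K hK1 hK2 using hαk
      have hsum : ∑ i, ((K i : ℝ) / d) = 1 := by
        rw [← hα1]
        exact Finset.sum_congr rfl fun i _ => (hK2 i).symm
      have hKd : ∑ i, K i = d := by
        rw [← Finset.sum_div, div_eq_one_iff_eq hd0.ne'] at hsum
        exact_mod_cast hsum
      refine ⟨K, by rwa [Finset.mem_coe, hmemT], ?_⟩
      rw [hx, Stmt8Aux.pt, hB]
      exact (Finset.sum_congr rfl fun i _ => by rw [hK2 i]).symm
    · rintro x ⟨k, hk, rfl⟩
      exact hpt_mem k (Finset.mem_coe.1 hk)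
  -- injectivity of the lattice-point map
  have hinjOn : Set.InjOn (Stmt8Aux.pt d B) ↑T := by
    intro k hk k' hk' h
    funext i
    have h1 := Stmt8Aux.coord_pt d B hd ((hmemT k).1 (Finset.mem_coe.1 hk)) i
    have h2 := Stmt8Aux.coord_pt d B hd ((hmemT k').1 (Finset.mem_coe.1 hk')) i
    rw [h] at h1
    rw [h1] at h2
    field_simp at h2
    exact_mod_cast h2
  -- the evaluation map on the lattice
  let E : restrictTotalDegree (Fin n) ℝ d →ₗ[ℝ] (↥T → ℝ) :=
    { toFun := fun p t => eval (Stmt8Aux.pt d B t.1) p.1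
      map_add' := fun p q => by funext t; simp
      map_smul' := fun c p => by funext t; simp [MvPolynomial.smul_eval] }
  have hsingle : ∀ (t : ↥T) (r : ℝ),
      (fun m : ↥T => if t = m then r else 0) ∈ LinearMap.range E := by
    intro t r
    have htd : ∑ i, t.1 i = d := (hmemT t.1).1 t.2
    set c : ℝ := eval (Stmt8Aux.pt d B t.1) (Stmt8Aux.Lag d B t.1) with hc
    have hc0 : c ≠ 0 := Stmt8Aux.eval_Lag_self d B hd htd
    refine ⟨⟨(r * c⁻¹) • Stmt8Aux.Lag d B t.1,
      Submodule.smul_mem _ _ ((MvPolynomial.mem_restrictTotalDegree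
        (Fin n) d (Stmt8Aux.Lag d B t.1)).2 (Stmt8Aux.totalDegree_Lag d B htd))⟩, ?_⟩
    funext m
    show eval (Stmt8Aux.pt d B m.1) ((r * c⁻¹) • Stmt8Aux.Lag d B t.1) = _
    rw [MvPolynomial.smul_eval]
    by_cases hmt : t = m
    · subst hmt
      rw [← hc, if_pos rfl, mul_assoc, inv_mul_cancel₀ hc0, mul_one]
    · have hmt' : m.1 ≠ t.1 := fun h => hmt (Subtype.ext h.symm)
      rw [Stmt8Aux.eval_Lag_ne d B hd htd ((hmemT m.1).1 m.2) hmt', if_neg hmt, mul_zero]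
  have hsurj : Function.Surjective E := by
    intro g
    have hmem : g ∈ LinearMap.range E := by
      rw [pi_eq_sum_univ g]
      refine Submodule.sum_mem _ fun t _ => ?_
      exact Submodule.smul_mem _ _ (hsingle t 1)
    exact hmem
  have hdim : Module.finrank ℝ (restrictTotalDegree (Fin n) ℝ d)
      = Module.finrank ℝ (↥T → ℝ) := by
    rw [Stmt8Aux.finrank_restrict n d, Module.finrank_pi, Fintype.card_coe]
  have hinj : Function.Injective E :=
    (LinearMap.injective_iff_surjective_of_finrank_eq_finrank hdim).2 hsurj
  refine ⟨?_, ?_, ?_, ?_⟩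
  · -- invariance
    intro σ α hα hmem
    rw [hS_def] at hmem ⊢
    obtain ⟨β, hβ1, heq, hβk⟩ := hmem
    have hαβ : ∀ i, α i = β i := by
      intro i
      have h1 := Stmt8Aux.coord_sum B α hα i
      have h2 := Stmt8Aux.coord_sum B β hβ1 i
      rw [hB] at h1 h2
      rw [← h1, ← h2, ← heq]
    refine ⟨fun j => α (σ.symm j), ?_, ?_, ?_⟩
    · rw [Equiv.sum_comp σ.symm α]
      exact hα
    · rw [← Equiv.sum_comp σ (fun j => α (σ.symm j) • v j)]
      simp
    · intro j
      obtain ⟨k, hk1, hk2⟩ := hβk (σ.symm j)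
      refine ⟨k, hk1, ?_⟩
      show α (σ.symm j) = _
      rw [hαβ]
      exact hk2
  · -- finiteness
    rw [hS_eq]
    exact T.finite_toSet.image _
  · -- cardinality
    rw [hS_eq, Set.ncard_image_of_injOn hinjOn, Set.ncard_coe_finset,
      Stmt8Aux.finrank_restrict n d, hT]
  · -- unisolvence
    intro p hp hvan
    have hpmem : p ∈ restrictTotalDegree (Fin n) ℝ d :=
      (MvPolynomial.mem_restrictTotalDegree (Fin n) d p).2 hp
    have hE0 : E ⟨p, hpmem⟩ = 0 := by
      funext t
      exact hvan _ (hpt_mem t.1 t.2)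
    have := hinj (hE0.trans (map_zero E).symm)
    exact congrArg Subtype.val this
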